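/- Let H be the 10×10 block matrix [[C_4, u, 0],[0, 0, vᵀ],[0, 0, C_5]], where u is a 0-1 column vector of length 4 with exactly one nonzero entry and v is a 0-1 column vector of length 5 with exactly one nonzero entry. Then θ(H) = 21 = g(10): the powers H, H², …, H^{21} are all 0-1 matrices, and H^{22} is not a 0-1 matrix. -/

import Mathlib

/-- A matrix over ℕ is a 0-1 matrix iff all its entries are at most 1. -/
def IsZO {α β : Type*} (A : Matrix α β ℕ) : Prop := ∀ i j, A i j ≤ 1

/-- The stable index of a 0-1 matrix: the smallest positive `k` with `A ^ (k+1)`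
not a 0-1 matrix, or `⊤` if no such `k` exists. -/
noncomputable def theta {α : Type*} [Fintype α] [DecidableEq α]
    (A : Matrix α α ℕ) : ℕ∞ :=
  sInf ((fun k : ℕ => (k : ℕ∞)) '' {k : ℕ | 1 ≤ k ∧ ¬ IsZO (A ^ (k + 1))})

/-- `g(n)` from the paper. -/
def g (n : ℕ) : ℕ :=
  if n % 2 = 1 then (n ^ 2 - 1) / 4
  else if n % 4 = 0 then (n ^ 2 - 4) / 4
  else (n ^ 2 - 16) / 4

/-- Basic circulant 0-1 matrix of order `n`. -/
def Cmat (n : ℕ) : Matrix (Fin n) (Fin n) ℕ :=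
  Matrix.of fun i j => if (j : ℕ) = ((i : ℕ) + 1) % n then 1 else 0

/-- Condition (★) on `(n, p, q)`. -/
def StarCond (n p q : ℕ) : Prop :=
  p + q = n ∧
  ((n % 2 = 1 ∧ ({p, q} : Finset ℕ) = {(n + 1) / 2, (n - 1) / 2}) ∨
   (n % 4 = 0 ∧ ({p, q} : Finset ℕ) = {(n + 2) / 2, (n - 2) / 2}) ∨
   (n % 4 = 2 ∧ ({p, q} : Finset ℕ) = {(n + 4) / 2, (n - 4) / 2}))

/-- The block matrix `[[C_p, u, 0], [0, 0, vᵀ], [0, 0, C_q]]`. -/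
def Hmat (p q : ℕ) (u : Fin p → ℕ) (v : Fin q → ℕ) :
    Matrix (Fin p ⊕ Unit ⊕ Fin q) (Fin p ⊕ Unit ⊕ Fin q) ℕ :=
  Matrix.of fun i j =>
    match i, j with
    | Sum.inl a, Sum.inl b => Cmat p a b
    | Sum.inl a, Sum.inr (Sum.inl _) => u a
    | Sum.inr (Sum.inl _), Sum.inr (Sum.inr b) => v b
    | Sum.inr (Sum.inr a), Sum.inr (Sum.inr b) => Cmat q a b
    | _, _ => 0


abbrev I10 := Fin 4 ⊕ Unit ⊕ Fin 5

def idx : I10 → Fin 10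
  | Sum.inl a => ⟨a, by omega⟩
  | Sum.inr (Sum.inl _) => 4
  | Sum.inr (Sum.inr b) => ⟨5 + b, by omega⟩

def ofT (T : Matrix (Fin 10) (Fin 10) ℕ) : Matrix I10 I10 ℕ :=
  Matrix.of fun i j => T (idx i) (idx j)

def H0 : Matrix I10 I10 ℕ :=
  Hmat 4 5 (fun a => if a = 0 then 1 else 0) (fun b => if b = 0 then 1 else 0)
def M1 : Matrix I10 I10 ℕ := ofT !![0,1,0,0,1,0,0,0,0,0;
  0,0,1,0,0,0,0,0,0,0;
  0,0,0,1,0,0,0,0,0,0;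
  1,0,0,0,0,0,0,0,0,0;
  0,0,0,0,0,1,0,0,0,0;
  0,0,0,0,0,0,1,0,0,0;
  0,0,0,0,0,0,0,1,0,0;
  0,0,0,0,0,0,0,0,1,0;
  0,0,0,0,0,0,0,0,0,1;
  0,0,0,0,0,1,0,0,0,0]
def M2 : Matrix I10 I10 ℕ := ofT !![0,0,1,0,0,1,0,0,0,0;
  0,0,0,1,0,0,0,0,0,0;
  1,0,0,0,0,0,0,0,0,0;
  0,1,0,0,1,0,0,0,0,0;
  0,0,0,0,0,0,1,0,0,0;
  0,0,0,0,0,0,0,1,0,0;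
  0,0,0,0,0,0,0,0,1,0;
  0,0,0,0,0,0,0,0,0,1;
  0,0,0,0,0,1,0,0,0,0;
  0,0,0,0,0,0,1,0,0,0]
def M3 : Matrix I10 I10 ℕ := ofT !![0,0,0,1,0,0,1,0,0,0;
  1,0,0,0,0,0,0,0,0,0;
  0,1,0,0,1,0,0,0,0,0;
  0,0,1,0,0,1,0,0,0,0;
  0,0,0,0,0,0,0,1,0,0;
  0,0,0,0,0,0,0,0,1,0;
  0,0,0,0,0,0,0,0,0,1;
  0,0,0,0,0,1,0,0,0,0;
  0,0,0,0,0,0,1,0,0,0;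
  0,0,0,0,0,0,0,1,0,0]
def M4 : Matrix I10 I10 ℕ := ofT !![1,0,0,0,0,0,0,1,0,0;
  0,1,0,0,1,0,0,0,0,0;
  0,0,1,0,0,1,0,0,0,0;
  0,0,0,1,0,0,1,0,0,0;
  0,0,0,0,0,0,0,0,1,0;
  0,0,0,0,0,0,0,0,0,1;
  0,0,0,0,0,1,0,0,0,0;
  0,0,0,0,0,0,1,0,0,0;
  0,0,0,0,0,0,0,1,0,0;
  0,0,0,0,0,0,0,0,1,0]
def M5 : Matrix I10 I10 ℕ := ofT !![0,1,0,0,1,0,0,0,1,0;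
  0,0,1,0,0,1,0,0,0,0;
  0,0,0,1,0,0,1,0,0,0;
  1,0,0,0,0,0,0,1,0,0;
  0,0,0,0,0,0,0,0,0,1;
  0,0,0,0,0,1,0,0,0,0;
  0,0,0,0,0,0,1,0,0,0;
  0,0,0,0,0,0,0,1,0,0;
  0,0,0,0,0,0,0,0,1,0;
  0,0,0,0,0,0,0,0,0,1]
def M6 : Matrix I10 I10 ℕ := ofT !![0,0,1,0,0,1,0,0,0,1;
  0,0,0,1,0,0,1,0,0,0;
  1,0,0,0,0,0,0,1,0,0;
  0,1,0,0,1,0,0,0,1,0;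
  0,0,0,0,0,1,0,0,0,0;
  0,0,0,0,0,0,1,0,0,0;
  0,0,0,0,0,0,0,1,0,0;
  0,0,0,0,0,0,0,0,1,0;
  0,0,0,0,0,0,0,0,0,1;
  0,0,0,0,0,1,0,0,0,0]
def M7 : Matrix I10 I10 ℕ := ofT !![0,0,0,1,0,1,1,0,0,0;
  1,0,0,0,0,0,0,1,0,0;
  0,1,0,0,1,0,0,0,1,0;
  0,0,1,0,0,1,0,0,0,1;
  0,0,0,0,0,0,1,0,0,0;
  0,0,0,0,0,0,0,1,0,0;
  0,0,0,0,0,0,0,0,1,0;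
  0,0,0,0,0,0,0,0,0,1;
  0,0,0,0,0,1,0,0,0,0;
  0,0,0,0,0,0,1,0,0,0]
def M8 : Matrix I10 I10 ℕ := ofT !![1,0,0,0,0,0,1,1,0,0;
  0,1,0,0,1,0,0,0,1,0;
  0,0,1,0,0,1,0,0,0,1;
  0,0,0,1,0,1,1,0,0,0;
  0,0,0,0,0,0,0,1,0,0;
  0,0,0,0,0,0,0,0,1,0;
  0,0,0,0,0,0,0,0,0,1;
  0,0,0,0,0,1,0,0,0,0;
  0,0,0,0,0,0,1,0,0,0;
  0,0,0,0,0,0,0,1,0,0]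
def M9 : Matrix I10 I10 ℕ := ofT !![0,1,0,0,1,0,0,1,1,0;
  0,0,1,0,0,1,0,0,0,1;
  0,0,0,1,0,1,1,0,0,0;
  1,0,0,0,0,0,1,1,0,0;
  0,0,0,0,0,0,0,0,1,0;
  0,0,0,0,0,0,0,0,0,1;
  0,0,0,0,0,1,0,0,0,0;
  0,0,0,0,0,0,1,0,0,0;
  0,0,0,0,0,0,0,1,0,0;
  0,0,0,0,0,0,0,0,1,0]
def M10 : Matrix I10 I10 ℕ := ofT !![0,0,1,0,0,1,0,0,1,1;
  0,0,0,1,0,1,1,0,0,0;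
  1,0,0,0,0,0,1,1,0,0;
  0,1,0,0,1,0,0,1,1,0;
  0,0,0,0,0,0,0,0,0,1;
  0,0,0,0,0,1,0,0,0,0;
  0,0,0,0,0,0,1,0,0,0;
  0,0,0,0,0,0,0,1,0,0;
  0,0,0,0,0,0,0,0,1,0;
  0,0,0,0,0,0,0,0,0,1]
def M11 : Matrix I10 I10 ℕ := ofT !![0,0,0,1,0,1,1,0,0,1;
  1,0,0,0,0,0,1,1,0,0;
  0,1,0,0,1,0,0,1,1,0;
  0,0,1,0,0,1,0,0,1,1;
  0,0,0,0,0,1,0,0,0,0;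
  0,0,0,0,0,0,1,0,0,0;
  0,0,0,0,0,0,0,1,0,0;
  0,0,0,0,0,0,0,0,1,0;
  0,0,0,0,0,0,0,0,0,1;
  0,0,0,0,0,1,0,0,0,0]
def M12 : Matrix I10 I10 ℕ := ofT !![1,0,0,0,0,1,1,1,0,0;
  0,1,0,0,1,0,0,1,1,0;
  0,0,1,0,0,1,0,0,1,1;
  0,0,0,1,0,1,1,0,0,1;
  0,0,0,0,0,0,1,0,0,0;
  0,0,0,0,0,0,0,1,0,0;
  0,0,0,0,0,0,0,0,1,0;
  0,0,0,0,0,0,0,0,0,1;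
  0,0,0,0,0,1,0,0,0,0;
  0,0,0,0,0,0,1,0,0,0]
def M13 : Matrix I10 I10 ℕ := ofT !![0,1,0,0,1,0,1,1,1,0;
  0,0,1,0,0,1,0,0,1,1;
  0,0,0,1,0,1,1,0,0,1;
  1,0,0,0,0,1,1,1,0,0;
  0,0,0,0,0,0,0,1,0,0;
  0,0,0,0,0,0,0,0,1,0;
  0,0,0,0,0,0,0,0,0,1;
  0,0,0,0,0,1,0,0,0,0;
  0,0,0,0,0,0,1,0,0,0;
  0,0,0,0,0,0,0,1,0,0]
def M14 : Matrix I10 I10 ℕ := ofT !![0,0,1,0,0,1,0,1,1,1;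
  0,0,0,1,0,1,1,0,0,1;
  1,0,0,0,0,1,1,1,0,0;
  0,1,0,0,1,0,1,1,1,0;
  0,0,0,0,0,0,0,0,1,0;
  0,0,0,0,0,0,0,0,0,1;
  0,0,0,0,0,1,0,0,0,0;
  0,0,0,0,0,0,1,0,0,0;
  0,0,0,0,0,0,0,1,0,0;
  0,0,0,0,0,0,0,0,1,0]
def M15 : Matrix I10 I10 ℕ := ofT !![0,0,0,1,0,1,1,0,1,1;
  1,0,0,0,0,1,1,1,0,0;
  0,1,0,0,1,0,1,1,1,0;
  0,0,1,0,0,1,0,1,1,1;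
  0,0,0,0,0,0,0,0,0,1;
  0,0,0,0,0,1,0,0,0,0;
  0,0,0,0,0,0,1,0,0,0;
  0,0,0,0,0,0,0,1,0,0;
  0,0,0,0,0,0,0,0,1,0;
  0,0,0,0,0,0,0,0,0,1]
def M16 : Matrix I10 I10 ℕ := ofT !![1,0,0,0,0,1,1,1,0,1;
  0,1,0,0,1,0,1,1,1,0;
  0,0,1,0,0,1,0,1,1,1;
  0,0,0,1,0,1,1,0,1,1;
  0,0,0,0,0,1,0,0,0,0;
  0,0,0,0,0,0,1,0,0,0;
  0,0,0,0,0,0,0,1,0,0;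
  0,0,0,0,0,0,0,0,1,0;
  0,0,0,0,0,0,0,0,0,1;
  0,0,0,0,0,1,0,0,0,0]
def M17 : Matrix I10 I10 ℕ := ofT !![0,1,0,0,1,1,1,1,1,0;
  0,0,1,0,0,1,0,1,1,1;
  0,0,0,1,0,1,1,0,1,1;
  1,0,0,0,0,1,1,1,0,1;
  0,0,0,0,0,0,1,0,0,0;
  0,0,0,0,0,0,0,1,0,0;
  0,0,0,0,0,0,0,0,1,0;
  0,0,0,0,0,0,0,0,0,1;
  0,0,0,0,0,1,0,0,0,0;
  0,0,0,0,0,0,1,0,0,0]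
def M18 : Matrix I10 I10 ℕ := ofT !![0,0,1,0,0,1,1,1,1,1;
  0,0,0,1,0,1,1,0,1,1;
  1,0,0,0,0,1,1,1,0,1;
  0,1,0,0,1,1,1,1,1,0;
  0,0,0,0,0,0,0,1,0,0;
  0,0,0,0,0,0,0,0,1,0;
  0,0,0,0,0,0,0,0,0,1;
  0,0,0,0,0,1,0,0,0,0;
  0,0,0,0,0,0,1,0,0,0;
  0,0,0,0,0,0,0,1,0,0]
def M19 : Matrix I10 I10 ℕ := ofT !![0,0,0,1,0,1,1,1,1,1;
  1,0,0,0,0,1,1,1,0,1;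
  0,1,0,0,1,1,1,1,1,0;
  0,0,1,0,0,1,1,1,1,1;
  0,0,0,0,0,0,0,0,1,0;
  0,0,0,0,0,0,0,0,0,1;
  0,0,0,0,0,1,0,0,0,0;
  0,0,0,0,0,0,1,0,0,0;
  0,0,0,0,0,0,0,1,0,0;
  0,0,0,0,0,0,0,0,1,0]
def M20 : Matrix I10 I10 ℕ := ofT !![1,0,0,0,0,1,1,1,1,1;
  0,1,0,0,1,1,1,1,1,0;
  0,0,1,0,0,1,1,1,1,1;
  0,0,0,1,0,1,1,1,1,1;
  0,0,0,0,0,0,0,0,0,1;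
  0,0,0,0,0,1,0,0,0,0;
  0,0,0,0,0,0,1,0,0,0;
  0,0,0,0,0,0,0,1,0,0;
  0,0,0,0,0,0,0,0,1,0;
  0,0,0,0,0,0,0,0,0,1]
def M21 : Matrix I10 I10 ℕ := ofT !![0,1,0,0,1,1,1,1,1,1;
  0,0,1,0,0,1,1,1,1,1;
  0,0,0,1,0,1,1,1,1,1;
  1,0,0,0,0,1,1,1,1,1;
  0,0,0,0,0,1,0,0,0,0;
  0,0,0,0,0,0,1,0,0,0;
  0,0,0,0,0,0,0,1,0,0;
  0,0,0,0,0,0,0,0,1,0;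
  0,0,0,0,0,0,0,0,0,1;
  0,0,0,0,0,1,0,0,0,0]
def M22 : Matrix I10 I10 ℕ := ofT !![0,0,1,0,0,2,1,1,1,1;
  0,0,0,1,0,1,1,1,1,1;
  1,0,0,0,0,1,1,1,1,1;
  0,1,0,0,1,1,1,1,1,1;
  0,0,0,0,0,0,1,0,0,0;
  0,0,0,0,0,0,0,1,0,0;
  0,0,0,0,0,0,0,0,1,0;
  0,0,0,0,0,0,0,0,0,1;
  0,0,0,0,0,1,0,0,0,0;
  0,0,0,0,0,0,1,0,0,0]
set_option maxRecDepth 40000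
theorem hp1 : H0 ^ 1 = M1 := by rw [pow_one]; decide
theorem hp2 : H0 ^ 2 = M2 := by have h : H0 ^ 2 = H0 ^ 1 * H0 := pow_succ H0 1; rw [h, hp1]; decide
theorem hp3 : H0 ^ 3 = M3 := by have h : H0 ^ 3 = H0 ^ 2 * H0 := pow_succ H0 2; rw [h, hp2]; decide
theorem hp4 : H0 ^ 4 = M4 := by have h : H0 ^ 4 = H0 ^ 3 * H0 := pow_succ H0 3; rw [h, hp3]; decide
theorem hp5 : H0 ^ 5 = M5 := by have h : H0 ^ 5 = H0 ^ 4 * H0 := pow_succ H0 4; rw [h, hp4]; decide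
theorem hp6 : H0 ^ 6 = M6 := by have h : H0 ^ 6 = H0 ^ 5 * H0 := pow_succ H0 5; rw [h, hp5]; decide
theorem hp7 : H0 ^ 7 = M7 := by have h : H0 ^ 7 = H0 ^ 6 * H0 := pow_succ H0 6; rw [h, hp6]; decide
theorem hp8 : H0 ^ 8 = M8 := by have h : H0 ^ 8 = H0 ^ 7 * H0 := pow_succ H0 7; rw [h, hp7]; decide
theorem hp9 : H0 ^ 9 = M9 := by have h : H0 ^ 9 = H0 ^ 8 * H0 := pow_succ H0 8; rw [h, hp8]; decide
theorem hp10 : H0 ^ 10 = M10 := by have h : H0 ^ 10 = H0 ^ 9 * H0 := pow_succ H0 9; rw [h, hp9]; decide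
theorem hp11 : H0 ^ 11 = M11 := by have h : H0 ^ 11 = H0 ^ 10 * H0 := pow_succ H0 10; rw [h, hp10]; decide
theorem hp12 : H0 ^ 12 = M12 := by have h : H0 ^ 12 = H0 ^ 11 * H0 := pow_succ H0 11; rw [h, hp11]; decide
theorem hp13 : H0 ^ 13 = M13 := by have h : H0 ^ 13 = H0 ^ 12 * H0 := pow_succ H0 12; rw [h, hp12]; decide
theorem hp14 : H0 ^ 14 = M14 := by have h : H0 ^ 14 = H0 ^ 13 * H0 := pow_succ H0 13; rw [h, hp13]; decide
theorem hp15 : H0 ^ 15 = M15 := by have h : H0 ^ 15 = H0 ^ 14 * H0 := pow_succ H0 14; rw [h, hp14]; decide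
theorem hp16 : H0 ^ 16 = M16 := by have h : H0 ^ 16 = H0 ^ 15 * H0 := pow_succ H0 15; rw [h, hp15]; decide
theorem hp17 : H0 ^ 17 = M17 := by have h : H0 ^ 17 = H0 ^ 16 * H0 := pow_succ H0 16; rw [h, hp16]; decide
theorem hp18 : H0 ^ 18 = M18 := by have h : H0 ^ 18 = H0 ^ 17 * H0 := pow_succ H0 17; rw [h, hp17]; decide
theorem hp19 : H0 ^ 19 = M19 := by have h : H0 ^ 19 = H0 ^ 18 * H0 := pow_succ H0 18; rw [h, hp18]; decide
theorem hp20 : H0 ^ 20 = M20 := by have h : H0 ^ 20 = H0 ^ 19 * H0 := pow_succ H0 19; rw [h, hp19]; decide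
theorem hp21 : H0 ^ 21 = M21 := by have h : H0 ^ 21 = H0 ^ 20 * H0 := pow_succ H0 20; rw [h, hp20]; decide
theorem hp22 : H0 ^ 22 = M22 := by have h : H0 ^ 22 = H0 ^ 21 * H0 := pow_succ H0 21; rw [h, hp21]; decide
theorem z1 : ∀ i j, M1 i j ≤ 1 := by letI : ∀ i, Decidable (∀ j, M1 i j ≤ 1) := fun i => inferInstance; decide
theorem z2 : ∀ i j, M2 i j ≤ 1 := by letI : ∀ i, Decidable (∀ j, M2 i j ≤ 1) := fun i => inferInstance; decide
theorem z3 : ∀ i j, M3 i j ≤ 1 := by letI : ∀ i, Decidable (∀ j, M3 i j ≤ 1) := fun i => inferInstance; decide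
theorem z4 : ∀ i j, M4 i j ≤ 1 := by letI : ∀ i, Decidable (∀ j, M4 i j ≤ 1) := fun i => inferInstance; decide
theorem z5 : ∀ i j, M5 i j ≤ 1 := by letI : ∀ i, Decidable (∀ j, M5 i j ≤ 1) := fun i => inferInstance; decide
theorem z6 : ∀ i j, M6 i j ≤ 1 := by letI : ∀ i, Decidable (∀ j, M6 i j ≤ 1) := fun i => inferInstance; decide
theorem z7 : ∀ i j, M7 i j ≤ 1 := by letI : ∀ i, Decidable (∀ j, M7 i j ≤ 1) := fun i => inferInstance; decide
theorem z8 : ∀ i j, M8 i j ≤ 1 := by letI : ∀ i, Decidable (∀ j, M8 i j ≤ 1) := fun i => inferInstance; decide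
theorem z9 : ∀ i j, M9 i j ≤ 1 := by letI : ∀ i, Decidable (∀ j, M9 i j ≤ 1) := fun i => inferInstance; decide
theorem z10 : ∀ i j, M10 i j ≤ 1 := by letI : ∀ i, Decidable (∀ j, M10 i j ≤ 1) := fun i => inferInstance; decide
theorem z11 : ∀ i j, M11 i j ≤ 1 := by letI : ∀ i, Decidable (∀ j, M11 i j ≤ 1) := fun i => inferInstance; decide
theorem z12 : ∀ i j, M12 i j ≤ 1 := by letI : ∀ i, Decidable (∀ j, M12 i j ≤ 1) := fun i => inferInstance; decide
theorem z13 : ∀ i j, M13 i j ≤ 1 := by letI : ∀ i, Decidable (∀ j, M13 i j ≤ 1) := fun i => inferInstance; decide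
theorem z14 : ∀ i j, M14 i j ≤ 1 := by letI : ∀ i, Decidable (∀ j, M14 i j ≤ 1) := fun i => inferInstance; decide
theorem z15 : ∀ i j, M15 i j ≤ 1 := by letI : ∀ i, Decidable (∀ j, M15 i j ≤ 1) := fun i => inferInstance; decide
theorem z16 : ∀ i j, M16 i j ≤ 1 := by letI : ∀ i, Decidable (∀ j, M16 i j ≤ 1) := fun i => inferInstance; decide
theorem z17 : ∀ i j, M17 i j ≤ 1 := by letI : ∀ i, Decidable (∀ j, M17 i j ≤ 1) := fun i => inferInstance; decide
theorem z18 : ∀ i j, M18 i j ≤ 1 := by letI : ∀ i, Decidable (∀ j, M18 i j ≤ 1) := fun i => inferInstance; decide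
theorem z19 : ∀ i j, M19 i j ≤ 1 := by letI : ∀ i, Decidable (∀ j, M19 i j ≤ 1) := fun i => inferInstance; decide
theorem z20 : ∀ i j, M20 i j ≤ 1 := by letI : ∀ i, Decidable (∀ j, M20 i j ≤ 1) := fun i => inferInstance; decide
theorem z21 : ∀ i j, M21 i j ≤ 1 := by letI : ∀ i, Decidable (∀ j, M21 i j ≤ 1) := fun i => inferInstance; decide
theorem nz : ¬ (∀ i j, M22 i j ≤ 1) := by letI : ∀ i, Decidable (∀ j, M22 i j ≤ 1) := fun i => inferInstance; decide

def shiftEquiv (a0 : Fin 4) (b0 : Fin 5) : I10 ≃ I10 :=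
  Equiv.sumCongr (Equiv.subRight a0) (Equiv.sumCongr (Equiv.refl Unit) (Equiv.subRight b0))

theorem key20 : ∀ (a0 : Fin 4) (b0 : Fin 5),
    Hmat 4 5 (fun a => if a = a0 then 1 else 0) (fun b => if b = b0 then 1 else 0)
      = H0.submatrix (shiftEquiv a0 b0) (shiftEquiv a0 b0) := by decide

theorem pow_submatrix (A : Matrix I10 I10 ℕ) (e : I10 ≃ I10) (m : ℕ) :
    (A.submatrix e e) ^ m = (A ^ m).submatrix e e := by
  induction m with
  | zero => simp [pow_zero, Matrix.submatrix_one_equiv]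
  | succ n ih => rw [pow_succ, ih, Matrix.submatrix_mul_equiv, pow_succ]

theorem isZO_submatrix (A : Matrix I10 I10 ℕ) (e : I10 ≃ I10) :
    IsZO (A.submatrix e e) ↔ IsZO A :=
  ⟨fun h i j => by simpa using h (e.symm i) (e.symm j), fun h i j => h _ _⟩

theorem zoH0 : ∀ m : ℕ, 1 ≤ m → m ≤ 21 → IsZO (H0 ^ m) := by
  intro m h1 h2
  interval_cases m
  · rw [hp1]; exact z1
  · rw [hp2]; exact z2
  · rw [hp3]; exact z3
  · rw [hp4]; exact z4
  · rw [hp5]; exact z5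
  · rw [hp6]; exact z6
  · rw [hp7]; exact z7
  · rw [hp8]; exact z8
  · rw [hp9]; exact z9
  · rw [hp10]; exact z10
  · rw [hp11]; exact z11
  · rw [hp12]; exact z12
  · rw [hp13]; exact z13
  · rw [hp14]; exact z14
  · rw [hp15]; exact z15
  · rw [hp16]; exact z16
  · rw [hp17]; exact z17
  · rw [hp18]; exact z18
  · rw [hp19]; exact z19
  · rw [hp20]; exact z20
  · rw [hp21]; exact z21

theorem theta_eq {α : Type} [Fintype α] [DecidableEq α] (A : Matrix α α ℕ)
    (h1 : ∀ m, 1 ≤ m → m ≤ 21 → IsZO (A ^ m)) (h2 : ¬ IsZO (A ^ 22)) :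
    theta A = (21 : ℕ∞) := by
  unfold theta
  apply le_antisymm
  · exact sInf_le ⟨21, ⟨by norm_num, h2⟩, rfl⟩
  · apply le_sInf
    rintro x ⟨k, ⟨hk1, hk2⟩, rfl⟩
    have : 21 ≤ k := by
      by_contra h
      push_neg at h
      exact hk2 (h1 (k + 1) (by omega) (by omega))
    show (21 : ℕ∞) ≤ (k : ℕ∞)
    exact_mod_cast this

theorem stmt_16 (u : Fin 4 → ℕ) (v : Fin 5 → ℕ)
    (hu1 : ∀ a, u a ≤ 1) (hv1 : ∀ b, v b ≤ 1)
    (hu : ∃! a, u a ≠ 0) (hv : ∃! b, v b ≠ 0) :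
    theta (Hmat 4 5 u v) = (21 : ℕ∞) ∧ g 10 = 21 ∧
    (∀ m : ℕ, 1 ≤ m → m ≤ 21 → IsZO ((Hmat 4 5 u v) ^ m)) ∧
    ¬ IsZO ((Hmat 4 5 u v) ^ 22) := by
  obtain ⟨a0, ha0, hua⟩ := hu
  obtain ⟨b0, hb0, hvb⟩ := hv
  have hue : u = fun a => if a = a0 then 1 else 0 := by
    funext a
    by_cases h : a = a0
    · subst h; have := hu1 a; simp; omega
    · have h0 : u a = 0 := by by_contra h'; exact h (hua a h')
      simp [h, h0]
  have hve : v = fun b => if b = b0 then 1 else 0 := by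
    funext b
    by_cases h : b = b0
    · subst h; have := hv1 b; simp; omega
    · have h0 : v b = 0 := by by_contra h'; exact h (hvb b h')
      simp [h, h0]
  have hH : Hmat 4 5 u v = H0.submatrix (shiftEquiv a0 b0) (shiftEquiv a0 b0) := by
    rw [hue, hve]; exact key20 a0 b0
  have hpow : ∀ m : ℕ, (Hmat 4 5 u v) ^ m = (H0 ^ m).submatrix (shiftEquiv a0 b0) (shiftEquiv a0 b0) := by
    intro m; rw [hH, pow_submatrix]
  have hZO : ∀ m : ℕ, 1 ≤ m → m ≤ 21 → IsZO ((Hmat 4 5 u v) ^ m) := by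
    intro m h1 h2
    rw [hpow m, isZO_submatrix]
    exact zoH0 m h1 h2
  have hnZO : ¬ IsZO ((Hmat 4 5 u v) ^ 22) := by
    rw [hpow 22, isZO_submatrix, hp22]
    exact nz
  exact ⟨theta_eq _ hZO hnZO, by norm_num [g], hZO, hnZO⟩
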